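/- arXiv:2508.07567 — 2 statements merged into one kernel-verified Lean document; each statement's English description precedes it below -/
import Mathlib

section
/- In the extended Arimoto–Blahut iteration, updating the primal variable to the Gibbs distribution does not decrease the surrogate objective: F̃(p_n, q_n) − F̃(p_{n−1}, q_n) = D(p_{n−1} ‖ p_n) + λ_n [∑ p_{n−1}(u,x)(w_{n−2}(u,x) − w_{n−1}(u,x))] ≥ 0, given λ_n ≥ 0, that p_n(u,x) ∝ e^{d[q_n](u,x) − λ_n w_{n−1}(u,x)} with ∑ p_n w_{n−1} = D = ∑ p_{n−1} w_{n−2}, and that w_{n−1} uses the distortion-minimizing estimator for p_{n−1} so that ∑ p_{n−1} w_{n−1} ≤ ∑ p_{n−1} w_{n−2}. -/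
/-- the primal (Gibbs) update of the extended Arimoto–Blahut algorithm
does not decrease the surrogate objective `Φ(p) = ∑ p (d - log p)`:
`Φ(p_n) - Φ(p_{n-1}) = D(p_{n-1} ‖ p_n) + λ_n ∑ p_{n-1} (w_{n-2} - w_{n-1}) ≥ 0`,
given `λ_n ≥ 0`, `p_n ∝ exp (d - λ_n w_{n-1})` with `∑ p_n w_{n-1} = D = ∑ p_{n-1} w_{n-2}`,
and `∑ p_{n-1} w_{n-1} ≤ ∑ p_{n-1} w_{n-2}` (optimality of the estimator behind `w_{n-1}`). -/
theorem primal_gibbs_update_improves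
    {ι : Type*} [Fintype ι] [Nonempty ι]
    (d wprev wcur : ι → ℝ) (D lam : ℝ) (hlam : 0 ≤ lam)
    (pprev pn : ι → ℝ)
    (hpprev0 : ∀ i, 0 ≤ pprev i) (hpprev1 : ∑ i, pprev i = 1)
    (hpn : pn = fun i => Real.exp (d i - lam * wcur i) / ∑ j, Real.exp (d j - lam * wcur j))
    (hfeas_n : ∑ i, pn i * wcur i = D)
    (hfeas_prev : ∑ i, pprev i * wprev i = D)
    (hopt : ∑ i, pprev i * wcur i ≤ ∑ i, pprev i * wprev i) :
    (∑ i, pn i * (d i - Real.log (pn i))) - (∑ i, pprev i * (d i - Real.log (pprev i)))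
      = (∑ i, pprev i * Real.log (pprev i / pn i))
        + lam * ∑ i, pprev i * (wprev i - wcur i) ∧
    0 ≤ (∑ i, pn i * (d i - Real.log (pn i)))
        - (∑ i, pprev i * (d i - Real.log (pprev i))) := by
  set Z : ℝ := ∑ j, Real.exp (d j - lam * wcur j) with hZ
  have hZpos : 0 < Z := Finset.sum_pos (fun j _ => Real.exp_pos _) Finset.univ_nonempty
  have hpnpos : ∀ i, 0 < pn i := by
    intro i; rw [hpn]; exact div_pos (Real.exp_pos _) hZpos
  have hlogpn : ∀ i, Real.log (pn i) = d i - lam * wcur i - Real.log Z := by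
    intro i; rw [hpn]; simp [Real.log_div (Real.exp_ne_zero _) (ne_of_gt hZpos)]
  have hpnsum : ∑ i, pn i = 1 := by
    rw [hpn]; rw [← Finset.sum_div]; exact div_self (ne_of_gt hZpos)
  -- value at pn
  have hA : ∑ i, pn i * (d i - Real.log (pn i)) = lam * D + Real.log Z := by
    have : ∀ i, pn i * (d i - Real.log (pn i))
        = lam * (pn i * wcur i) + Real.log Z * pn i := by
      intro i; rw [hlogpn i]; ring
    rw [Finset.sum_congr rfl (fun i _ => this i), Finset.sum_add_distrib,
      ← Finset.mul_sum, ← Finset.mul_sum, hfeas_n, hpnsum, mul_one]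
  -- value at pprev
  have hB : ∑ i, pprev i * (d i - Real.log (pprev i))
      = (-(∑ i, pprev i * Real.log (pprev i / pn i)))
        + lam * (∑ i, pprev i * wcur i) + Real.log Z := by
    have key : ∀ i, pprev i * (d i - Real.log (pprev i))
        = -(pprev i * Real.log (pprev i / pn i)) + lam * (pprev i * wcur i)
          + Real.log Z * pprev i := by
      intro i
      rcases eq_or_lt_of_le (hpprev0 i) with h0 | hpos
      · simp [← h0]
      · have hd : d i = Real.log (pn i) + lam * wcur i + Real.log Z := by
          rw [hlogpn i]; ring
        rw [hd, Real.log_div (ne_of_gt hpos) (ne_of_gt (hpnpos i))]; ring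
    rw [Finset.sum_congr rfl (fun i _ => key i), Finset.sum_add_distrib,
      Finset.sum_add_distrib, Finset.sum_neg_distrib, ← Finset.mul_sum,
      ← Finset.mul_sum, hpprev1, mul_one]
  have hident : (∑ i, pn i * (d i - Real.log (pn i)))
      - (∑ i, pprev i * (d i - Real.log (pprev i)))
      = (∑ i, pprev i * Real.log (pprev i / pn i))
        + lam * ∑ i, pprev i * (wprev i - wcur i) := by
    have hsplit : ∑ i, pprev i * (wprev i - wcur i)
        = (∑ i, pprev i * wprev i) - ∑ i, pprev i * wcur i := by
      rw [← Finset.sum_sub_distrib]; exact Finset.sum_congr rfl (fun i _ => by ring)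
    rw [hA, hB, hsplit, hfeas_prev]; ring
  have hKL : 0 ≤ ∑ i, pprev i * Real.log (pprev i / pn i) := by
    have hterm : ∀ i, pprev i - pn i ≤ pprev i * Real.log (pprev i / pn i) := by
      intro i
      rcases eq_or_lt_of_le (hpprev0 i) with h0 | hpos
      · simp [← h0]; exact le_of_lt (hpnpos i)
      · have hx : 0 < pn i / pprev i := div_pos (hpnpos i) hpos
        have hlog := Real.log_le_sub_one_of_pos hx
        have h1 : pprev i * Real.log (pn i / pprev i) ≤ pn i - pprev i := by
          calc pprev i * Real.log (pn i / pprev i)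
              ≤ pprev i * (pn i / pprev i - 1) :=
                mul_le_mul_of_nonneg_left hlog (le_of_lt hpos)
            _ = pn i - pprev i := by field_simp
        have h2 : Real.log (pprev i / pn i) = -Real.log (pn i / pprev i) := by
          rw [← Real.log_inv]; congr 1
          rw [inv_div]
        rw [h2]; nlinarith
    calc (0:ℝ) = (∑ i, pprev i) - ∑ i, pn i := by rw [hpprev1, hpnsum]; ring
      _ = ∑ i, (pprev i - pn i) := by rw [Finset.sum_sub_distrib]
      _ ≤ _ := Finset.sum_le_sum (fun i _ => hterm i)
  have hW : 0 ≤ ∑ i, pprev i * (wprev i - wcur i) := by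
    have : ∑ i, pprev i * (wprev i - wcur i)
        = (∑ i, pprev i * wprev i) - ∑ i, pprev i * wcur i := by
      rw [← Finset.sum_sub_distrib]; exact Finset.sum_congr rfl (fun i _ => by ring)
    rw [this]; linarith
  refine ⟨hident, ?_⟩
  rw [hident]
  have := mul_nonneg hlam hW
  linarith
end

section
/- Let d, w : I → ℝ on a finite set I and suppose λ* solves ∑_i w(i) e^{d(i) − λ w(i)} = D ∑_i e^{d(i) − λ w(i)}, i.e., the Gibbs distribution p_λ*(i) ∝ e^{d(i) − λ* w(i)} satisfies E_{p_λ*}[w] = D. If additionally min_i w(i) < D < max_i w(i), then such a λ* exists. -/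
open Filter Real

lemma gibbs_aux {ι : Type*} [Fintype ι] [DecidableEq ι] (c d : ι → ℝ) (i0 : ι) (h0 : c i0 < 0) :
    ∃ a : ℝ, ∑ i, c i * Real.exp (d i - a * c i) < 0 := by
  set B : ℝ := ∑ i ∈ Finset.univ.erase i0, max 0 (c i * Real.exp (d i)) with hB
  have harg : Tendsto (fun a : ℝ => d i0 - a * c i0) atTop atTop := by
    have : Tendsto (fun a : ℝ => a * (-c i0)) atTop atTop :=
      Tendsto.atTop_mul_const (by linarith) tendsto_id
    have := tendsto_atTop_add_const_left atTop (d i0) this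
    convert this using 2 with a
    ring
  have hterm : Tendsto (fun a : ℝ => c i0 * Real.exp (d i0 - a * c i0)) atTop atBot := by
    have hexp : Tendsto (fun a : ℝ => Real.exp (d i0 - a * c i0)) atTop atTop :=
      Real.tendsto_exp_atTop.comp harg
    exact Tendsto.const_mul_atTop_of_neg h0 hexp
  have hev : ∀ᶠ a in atTop, c i0 * Real.exp (d i0 - a * c i0) < -B :=
    hterm.eventually (eventually_lt_atBot (-B))
  obtain ⟨a, ha, ha0⟩ := (hev.and (eventually_ge_atTop (0:ℝ))).exists
  refine ⟨a, ?_⟩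
  have hsplit : ∑ i, c i * Real.exp (d i - a * c i)
      = c i0 * Real.exp (d i0 - a * c i0)
        + ∑ i ∈ Finset.univ.erase i0, c i * Real.exp (d i - a * c i) :=
    (Finset.add_sum_erase _ _ (Finset.mem_univ i0)).symm
  have hbound : ∑ i ∈ Finset.univ.erase i0, c i * Real.exp (d i - a * c i) ≤ B := by
    apply Finset.sum_le_sum
    intro i _
    rcases le_or_gt (c i) 0 with h | h
    · have : c i * Real.exp (d i - a * c i) ≤ 0 :=
        mul_nonpos_of_nonpos_of_nonneg h (Real.exp_pos _).le
      exact this.trans (le_max_left _ _)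
    · have hle : Real.exp (d i - a * c i) ≤ Real.exp (d i) := by
        apply Real.exp_le_exp.2
        nlinarith
      have : c i * Real.exp (d i - a * c i) ≤ c i * Real.exp (d i) :=
        mul_le_mul_of_nonneg_left hle h.le
      exact this.trans (le_max_right _ _)
  rw [hsplit]
  linarith

/-- if `min w < D < max w` then there exists `λ*` such that the Gibbs
distribution `p_{λ*} ∝ exp (d - λ* w)` satisfies `E_{p_{λ*}}[w] = D`, i.e.
`∑ w e^{d - λ* w} = D ∑ e^{d - λ* w}`. -/
theorem gibbs_lambda_exists
    {ι : Type*} [Fintype ι] [Nonempty ι] (d w : ι → ℝ) (D : ℝ)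
    (hmin : Finset.univ.inf' Finset.univ_nonempty w < D)
    (hmax : D < Finset.univ.sup' Finset.univ_nonempty w) :
    ∃ lam : ℝ, ∑ i, w i * Real.exp (d i - lam * w i)
      = D * ∑ i, Real.exp (d i - lam * w i) := by
  classical
  set c : ι → ℝ := fun i => w i - D with hc
  set g : ℝ → ℝ := fun lam => ∑ i, c i * Real.exp (d i - lam * c i) with hg
  have hcont : Continuous g := by
    apply continuous_finset_sum
    intro i _
    exact continuous_const.mul ((continuous_const.sub (continuous_id.mul continuous_const)).rexp)
  -- a with g a < 0
  obtain ⟨i0, hi0⟩ := Finset.exists_mem_eq_inf' Finset.univ_nonempty w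
  have h0 : c i0 < 0 := by simp only [hc]; linarith [hi0.2 ▸ hmin, hi0.2.symm ▸ hmin]
  obtain ⟨a, ha⟩ := gibbs_aux c d i0 h0
  -- b with g b > 0
  obtain ⟨i1, hi1⟩ := Finset.exists_mem_eq_sup' Finset.univ_nonempty w
  have h1 : (fun i => -c i) i1 < 0 := by simp only [hc]; linarith [hi1.2.symm ▸ hmax]
  obtain ⟨b', hb'⟩ := gibbs_aux (fun i => -c i) d i1 h1
  have hb : 0 < g (-b') := by
    have : ∑ i, -c i * Real.exp (d i - b' * -c i) = -g (-b') := by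
      rw [hg, ← Finset.sum_neg_distrib]
      apply Finset.sum_congr rfl
      intro i _
      ring_nf
    rw [this] at hb'
    linarith
  -- IVT
  have : ∃ lam, g lam = 0 := by
    have ha' : g a < 0 := ha
    rcases le_total (-b') a with h | h
    · have := intermediate_value_Icc' h hcont.continuousOn
      obtain ⟨lam, _, hlam⟩ := this ⟨ha'.le, hb.le⟩
      exact ⟨lam, hlam⟩
    · have := intermediate_value_Icc h hcont.continuousOn
      obtain ⟨lam, _, hlam⟩ := this ⟨ha'.le, hb.le⟩
      exact ⟨lam, hlam⟩
  obtain ⟨lam, hlam⟩ := this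
  refine ⟨lam, ?_⟩
  have key : ∑ i, (w i - D) * Real.exp (d i - lam * w i) = Real.exp (-(lam * D)) * g lam := by
    rw [hg, Finset.mul_sum]
    apply Finset.sum_congr rfl
    intro i _
    rw [hc, mul_comm (Real.exp _), mul_assoc, ← Real.exp_add]
    congr 2
    ring
  rw [hlam, mul_zero] at key
  have expand : ∑ i, (w i - D) * Real.exp (d i - lam * w i)
      = ∑ i, w i * Real.exp (d i - lam * w i) - D * ∑ i, Real.exp (d i - lam * w i) := by
    rw [Finset.mul_sum, ← Finset.sum_sub_distrib]
    apply Finset.sum_congr rfl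
    intro i _
    ring
  rw [expand] at key
  linarith
end
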